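/- Let G be a locally finite weakly bridged graph with a LexBFS ordering from base point u, assigning to each vertex v ≠ u a father f(v). Then the combing paths to u given by iterating f form a geodesic 1-combing: for adjacent vertices v, w, the paths P_v = (v, f(v), f²(v), ..., u) and P_w are shortest paths and satisfy d(P_v(t), P_w(t)) ≤ 1 for all t (indexing from u). -/

import Mathlib

/-- In a locally finite weakly bridged graph with base point u, the combing
paths obtained by iterating a LexBFS father map f (satisfying the Fellow
Traveler Property) are geodesics that 1-fellow-travel for adjacent vertices. -/
theorem stmt19 {V : Type*} (G : SimpleGraph V) (hconn : G.Connected)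
    (hlf : G.LocallyFinite)
    (tri : ∀ u v w : V, G.Adj v w → G.dist u v = G.dist u w →
      ∃ x, G.Adj v x ∧ G.Adj w x ∧ G.dist u x + 1 = G.dist u v)
    (quad : ∀ u v w z : V, G.Adj v z → G.Adj w z → G.dist v w = 2 →
      G.dist u v = G.dist u w → G.dist u z = G.dist u v + 1 →
      ∃ x, G.Adj v x ∧ G.Adj w x ∧ G.dist u x + 1 = G.dist u v)
    (noC4 : ¬ ∃ a b c d : V, a ≠ c ∧ b ≠ d ∧ G.Adj a b ∧ G.Adj b c ∧ G.Adj c d ∧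
      G.Adj d a ∧ ¬ G.Adj a c ∧ ¬ G.Adj b d)
    (u : V) (f : V → V) (α : V → ℕ) (hα : Function.Injective α)
    (hfu : f u = u)
    (hfather : ∀ v : V, v ≠ u → G.Adj v (f v) ∧ G.dist u (f v) + 1 = G.dist u v)
    (FTP : ∀ v w : V, v ≠ u → w ≠ u → G.Adj v w →
      (f v = f w ∨ G.Adj (f v) (f w)) ∧
      (G.Adj (f v) (f w) → α w < α v → G.Adj (f w) v)) :
    (∀ (v : V) (t : ℕ), G.dist u (f^[t] v) = G.dist u v - t) ∧
    ∀ v w : V, G.Adj v w → ∀ t : ℕ,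
      G.dist (f^[G.dist u v - t] v) (f^[G.dist u w - t] w) ≤ 1 := by
  have hzero : ∀ x : V, G.dist u x = 0 → x = u := fun x hx =>
    (hconn.dist_eq_zero_iff.mp hx).symm
  have hadj1 : ∀ x y : V, G.Adj x y → G.dist x y ≤ 1 := fun x y h =>
    le_of_eq (SimpleGraph.dist_eq_one_iff_adj.mpr h)
  have part1 : ∀ (v : V) (t : ℕ), G.dist u (f^[t] v) = G.dist u v - t := by
    intro v t
    induction t with
    | zero => simp
    | succ t ih =>
      rw [Function.iterate_succ_apply']
      by_cases hx : f^[t] v = u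
      · rw [hx] at ih
        rw [hx, hfu]
        simp only [SimpleGraph.dist_self] at ih ⊢
        omega
      · have h := (hfather _ hx).2
        omega
  -- same-level fellow traveling
  have same : ∀ d : ℕ, ∀ v w : V, G.dist u v = d → G.dist u w = d →
      (v = w ∨ G.Adj v w) → ∀ t : ℕ, G.dist (f^[d - t] v) (f^[d - t] w) ≤ 1 := by
    intro d
    induction d with
    | zero =>
      intro v w hv hw _ t
      rw [hzero v hv, hzero w hw]
      simp [SimpleGraph.dist_self]
    | succ d ih =>
      intro v w hv hw hvw t
      rcases hvw with rfl | hvw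
      · simp [SimpleGraph.dist_self]
      have hvne : v ≠ u := by
        intro h; rw [h, SimpleGraph.dist_self] at hv; omega
      have hwne : w ≠ u := by
        intro h; rw [h, SimpleGraph.dist_self] at hw; omega
      rcases le_or_gt (d + 1) t with ht | ht
      · rw [Nat.sub_eq_zero_of_le ht]
        simpa using hadj1 v w hvw
      · have hd : d + 1 - t = (d - t) + 1 := by omega
        rw [hd, Function.iterate_succ_apply, Function.iterate_succ_apply]
        have hfv : G.dist u (f v) = d := by have := (hfather v hvne).2; omega
        have hfw : G.dist u (f w) = d := by have := (hfather w hwne).2; omega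
        exact ih (f v) (f w) hfv hfw ((FTP v w hvne hwne hvw).1) t
  -- step-down claim: the father of the upper vertex is equal or adjacent to the lower one
  have step : ∀ v w : V, G.Adj v w → G.dist u w = G.dist u v + 1 →
      (v = f w ∨ G.Adj v (f w)) := by
    intro v w hvw hdw
    have hwne : w ≠ u := by
      intro h; rw [h, SimpleGraph.dist_self] at hdw; omega
    obtain ⟨hadj, hdfw⟩ := hfather w hwne
    by_cases hvu : v = u
    · rw [hvu, SimpleGraph.dist_self] at hdw
      left
      rw [hvu]
      exact (hzero (f w) (by omega)).symm
    by_cases h1 : v = f w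
    · exact Or.inl h1
    by_cases h2 : G.Adj v (f w)
    · exact Or.inr h2
    exfalso
    have hd2 : G.dist v (f w) = 2 := by
      have hle : G.dist v (f w) ≤ 2 := by
        calc G.dist v (f w) ≤ G.dist v w + G.dist w (f w) := hconn.dist_triangle
          _ ≤ 1 + 1 := add_le_add (hadj1 _ _ hvw) (hadj1 _ _ hadj)
      have h0 : G.dist v (f w) ≠ 0 := fun h =>
        h1 (hconn.dist_eq_zero_iff.mp h)
      have h1' : G.dist v (f w) ≠ 1 := fun h =>
        h2 (SimpleGraph.dist_eq_one_iff_adj.mp h)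
      omega
    have hdveq : G.dist u v = G.dist u (f w) := by omega
    obtain ⟨x, hxv, hxfw, hxd⟩ := quad u v (f w) w hvw (G.adj_symm hadj) hd2 hdveq (by omega)
    apply noC4
    refine ⟨x, v, w, f w, ?_, h1, G.adj_symm hxv, hvw, hadj, hxfw, ?_, h2⟩
    · intro h; rw [h] at hxd; omega
    · intro hxw
      have : G.dist u w ≤ G.dist u x + 1 := by
        calc G.dist u w ≤ G.dist u x + G.dist x w := hconn.dist_triangle
          _ ≤ G.dist u x + 1 := Nat.add_le_add_left (hadj1 _ _ hxw) _
      omega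
  refine ⟨part1, ?_⟩
  intro v w hvw t
  have hd1 : G.dist u w ≤ G.dist u v + 1 := by
    calc G.dist u w ≤ G.dist u v + G.dist v w := hconn.dist_triangle
      _ ≤ G.dist u v + 1 := Nat.add_le_add_left (hadj1 _ _ hvw) _
  have hd2 : G.dist u v ≤ G.dist u w + 1 := by
    calc G.dist u v ≤ G.dist u w + G.dist w v := hconn.dist_triangle
      _ ≤ G.dist u w + 1 := Nat.add_le_add_left (hadj1 _ _ (G.adj_symm hvw)) _
  rcases lt_trichotomy (G.dist u v) (G.dist u w) with hlt | heq | hgt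
  · -- dist u w = dist u v + 1
    have hw : G.dist u w = G.dist u v + 1 := by omega
    rcases le_or_gt (G.dist u v + 1) t with ht | ht
    · rw [hw, Nat.sub_eq_zero_of_le ht, Nat.sub_eq_zero_of_le (by omega)]
      simpa using hadj1 v w hvw
    · have hwne : w ≠ u := by
        intro h; rw [h, SimpleGraph.dist_self] at hw; omega
      have hdfw : G.dist u (f w) = G.dist u v := by
        have := (hfather w hwne).2; omega
      have hsub : G.dist u w - t = (G.dist u v - t) + 1 := by omega
      rw [hsub, Function.iterate_succ_apply]
      exact same (G.dist u v) v (f w) rfl hdfw (step v w hvw hw) t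
  · rw [← heq]
    exact same (G.dist u v) v w rfl heq.symm (Or.inr hvw) t
  · -- dist u v = dist u w + 1
    have hv : G.dist u v = G.dist u w + 1 := by omega
    rcases le_or_gt (G.dist u w + 1) t with ht | ht
    · rw [hv, Nat.sub_eq_zero_of_le ht, Nat.sub_eq_zero_of_le (by omega)]
      simpa using hadj1 v w hvw
    · have hvne : v ≠ u := by
        intro h; rw [h, SimpleGraph.dist_self] at hv; omega
      have hdfv : G.dist u (f v) = G.dist u w := by
        have := (hfather v hvne).2; omega
      have hsub : G.dist u v - t = (G.dist u w - t) + 1 := by omega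
      rw [hsub, Function.iterate_succ_apply]
      have hstep := step w v (G.adj_symm hvw) hv
      have hstep' : f v = w ∨ G.Adj (f v) w := by
        rcases hstep with h | h
        · exact Or.inl h.symm
        · exact Or.inr (G.adj_symm h)
      exact same (G.dist u w) (f v) w hdfv rfl hstep' t
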